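/- arXiv:1312.6495 — 4 statements merged into one kernel-verified Lean document; each statement's English description precedes it below -/
import Mathlib

section
/- Let 𝒢 be a set of finite signed measures on a measurable space that is downward closed (ν ∈ 𝒢 and λ ≤ ν implies λ ∈ 𝒢) and closed under lattice suprema of pairs. Suppose for a given measure μ there exists μ* ∈ 𝒢 which is the largest element of 𝒢 below μ. Then for every ν ∈ 𝒢, ‖μ − μ*‖ ≤ ‖μ − ν‖ in total variation, and μ* is the unique element of 𝒢 attaining the minimum of ν ↦ ‖μ − ν‖ over 𝒢. -/
open MeasureTheory

namespace Stmt7Aux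

variable {α : Type*} [MeasurableSpace α]

lemma totalVariation_toSignedMeasure (m : Measure α) [IsFiniteMeasure m] :
    m.toSignedMeasure.totalVariation = m := by
  have h : m.toSignedMeasure.toJordanDecomposition =
      ⟨m, 0, Measure.MutuallySingular.zero_right⟩ := by
    apply SignedMeasure.toJordanDecomposition_eq
    simp [JordanDecomposition.toSignedMeasure, Measure.toSignedMeasure_zero]
  rw [SignedMeasure.totalVariation, h]
  simp

lemma totalVariation_of_nonneg {s : SignedMeasure α} (hs : 0 ≤ s) :
    s.totalVariation Set.univ = ENNReal.ofReal (s Set.univ) := by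
  have hs' : VectorMeasure.restrict 0 Set.univ ≤ VectorMeasure.restrict s Set.univ :=
    (VectorMeasure.le_restrict_univ_iff_le _ _).2 hs
  set m := s.toMeasureOfZeroLE Set.univ MeasurableSet.univ hs' with hm
  have hsm : m.toSignedMeasure = s := SignedMeasure.toMeasureOfZeroLE_toSignedMeasure _ _
  rw [← hsm, totalVariation_toSignedMeasure,
    Measure.toSignedMeasure_apply_measurable MeasurableSet.univ, measureReal_def,
    ENNReal.ofReal_toReal (measure_ne_top _ _)]

lemma eq_zero_of_nonneg_univ {s : SignedMeasure α} (hs : 0 ≤ s)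
    (h : s Set.univ = 0) : s = 0 := by
  ext i hi
  have h1 : s i + s iᶜ = s Set.univ := by
    rw [← VectorMeasure.of_union (disjoint_compl_right) hi hi.compl, Set.union_compl_self]
  have h2 : 0 ≤ s i := by
    simpa using (VectorMeasure.le_iff.1 hs) i hi
  have h3 : 0 ≤ s iᶜ := by
    simpa using (VectorMeasure.le_iff.1 hs) iᶜ hi.compl
  simp only [VectorMeasure.coe_zero, Pi.zero_apply]
  linarith [h1, h, h2, h3]

lemma apply_eq {s t : SignedMeasure α} (h : s = t) (i : Set α) : s i = t i := by rw [h]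

end Stmt7Aux

/-- If 𝒢 is a downward-closed class of finite signed measures closed under pairwise lattice
suprema and μ* is the largest element of 𝒢 below μ, then μ* is the (unique) best
approximation of μ from 𝒢 in total variation norm. -/
theorem stmt7 {α : Type*} [MeasurableSpace α] (G : Set (SignedMeasure α))
    (hdown : ∀ ν ∈ G, ∀ lam : SignedMeasure α, lam ≤ ν → lam ∈ G)
    (hsup : ∀ μ₁ ∈ G, ∀ μ₂ ∈ G, ∀ σ : SignedMeasure α, IsLUB {μ₁, μ₂} σ → σ ∈ G)
    (μ μstar : SignedMeasure α) (hmem : μstar ∈ G) (hle : μstar ≤ μ)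
    (hmax : ∀ ν ∈ G, ν ≤ μ → ν ≤ μstar) :
    (∀ ν ∈ G, (μ - μstar).totalVariation Set.univ ≤ (μ - ν).totalVariation Set.univ) ∧
    (∀ ν ∈ G, (μ - ν).totalVariation Set.univ = (μ - μstar).totalVariation Set.univ →
      ν = μstar) := by
  -- nonnegativity of μ - μstar
  have hnn : (0 : SignedMeasure α) ≤ μ - μstar := by
    rw [VectorMeasure.le_iff]
    intro i hi
    have := VectorMeasure.le_iff.1 hle i hi
    simp only [VectorMeasure.sub_apply, VectorMeasure.coe_zero, Pi.zero_apply]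
    linarith
  -- the key construction, for any ν ∈ G
  have key : ∀ ν ∈ G,
      (μ - μstar).totalVariation Set.univ
        ≤ (μ - ν).toJordanDecomposition.posPart Set.univ ∧
      (μ - ν).totalVariation Set.univ
        = (μ - ν).toJordanDecomposition.posPart Set.univ
          + (μ - ν).toJordanDecomposition.negPart Set.univ := by
    intro ν hν
    set p := (μ - ν).toJordanDecomposition.posPart with hp
    set n := (μ - ν).toJordanDecomposition.negPart with hn
    have hjd : (μ - ν) = p.toSignedMeasure - n.toSignedMeasure := by
      conv_lhs => rw [← SignedMeasure.toSignedMeasure_toJordanDecomposition (μ - ν)]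
      rfl
    set lam : SignedMeasure α := μ - p.toSignedMeasure with hlam
    have hlamν : lam ≤ ν := by
      rw [VectorMeasure.le_iff]
      intro i hi
      have h1 : (μ - ν) i = p.toSignedMeasure i - n.toSignedMeasure i := by
        have := Stmt7Aux.apply_eq hjd i
        simpa [VectorMeasure.sub_apply] using this
      have h2 : 0 ≤ n.toSignedMeasure i := by
        rw [Measure.toSignedMeasure_apply_measurable hi]; positivity
      simp only [hlam, VectorMeasure.sub_apply] at h1 ⊢
      linarith
    have hlamμ : lam ≤ μ := by
      rw [VectorMeasure.le_iff]
      intro i hi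
      have h2 : 0 ≤ p.toSignedMeasure i := by
        rw [Measure.toSignedMeasure_apply_measurable hi]; positivity
      simp only [hlam, VectorMeasure.sub_apply]
      linarith
    have hlamG : lam ∈ G := hdown ν hν lam hlamν
    have hlamstar : lam ≤ μstar := hmax lam hlamG hlamμ
    -- (μ - μstar) univ ≤ P univ
    have hPle : (μ - μstar) Set.univ ≤ p.toSignedMeasure Set.univ := by
      have := VectorMeasure.le_iff.1 hlamstar Set.univ MeasurableSet.univ
      simp only [hlam, VectorMeasure.sub_apply] at this ⊢
      linarith
    have htv1 : (μ - μstar).totalVariation Set.univ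
        = ENNReal.ofReal ((μ - μstar) Set.univ) := Stmt7Aux.totalVariation_of_nonneg hnn
    have hPuniv : p.toSignedMeasure Set.univ = (p Set.univ).toReal :=
      Measure.toSignedMeasure_apply_measurable MeasurableSet.univ
    constructor
    · rw [htv1]
      calc ENNReal.ofReal ((μ - μstar) Set.univ)
          ≤ ENNReal.ofReal (p.toSignedMeasure Set.univ) := ENNReal.ofReal_le_ofReal hPle
        _ = p Set.univ := by rw [hPuniv, ENNReal.ofReal_toReal (measure_ne_top _ _)]
    · rw [SignedMeasure.totalVariation]; rfl
  refine ⟨fun ν hν => ?_, fun ν hν heq => ?_⟩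
  · obtain ⟨h1, h2⟩ := key ν hν
    rw [h2]
    exact h1.trans le_self_add
  · obtain ⟨h1, h2⟩ := key ν hν
    set p := (μ - ν).toJordanDecomposition.posPart with hp
    set n := (μ - ν).toJordanDecomposition.negPart with hn
    haveI : IsFiniteMeasure p := inferInstance
    haveI : IsFiniteMeasure n := inferInstance
    have hjd : μ - ν = p.toSignedMeasure - n.toSignedMeasure := by
      conv_lhs => rw [← SignedMeasure.toSignedMeasure_toJordanDecomposition (μ - ν)]
      rfl
    clear_value p n
    -- equality forces n univ = 0 and tv(μ-μstar) = p univ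
    have hple : p Set.univ + n Set.univ ≤ p Set.univ := by
      rw [← h2, heq]; exact h1
    have hnz : n Set.univ = 0 := by
      by_contra hne
      exact absurd hple (by
        have : p Set.univ < p Set.univ + n Set.univ :=
          ENNReal.lt_add_right (measure_ne_top _ _) hne
        exact not_le.2 this)
    have hn0 : n = 0 := Measure.measure_univ_eq_zero.1 hnz
    have hN : n.toSignedMeasure = (0 : SignedMeasure α) := by
      ext i hi
      have hni : n i = 0 :=
        nonpos_iff_eq_zero.1 (hnz ▸ measure_mono (Set.subset_univ i))
      rw [Measure.toSignedMeasure_apply_measurable hi, measureReal_def, hni]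
      simp
    have hμν : μ - ν = p.toSignedMeasure := by
      rw [hjd, hN, sub_zero]
    -- tv(μ-μstar) univ = p univ
    have hpeq : (μ - μstar).totalVariation Set.univ = p Set.univ := by
      apply le_antisymm h1
      rw [← heq, h2, hnz, add_zero]
    have htv1 : (μ - μstar).totalVariation Set.univ
        = ENNReal.ofReal ((μ - μstar) Set.univ) := Stmt7Aux.totalVariation_of_nonneg hnn
    have hreal : (μ - μstar) Set.univ = (p Set.univ).toReal := by
      have := hpeq
      rw [htv1] at this
      have hnn' : 0 ≤ (μ - μstar) Set.univ := by
        have := VectorMeasure.le_iff.1 hnn Set.univ MeasurableSet.univ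
        simpa using this
      rw [← this, ENNReal.toReal_ofReal hnn']
    have hsub : (0 : SignedMeasure α) ≤ (μ - ν) - (μ - μstar) := by
      -- (μ - ν) - (μ - μstar) = μstar - ν ; and μstar ≥ lam ... need ν ≤ μstar
      -- from key's construction: lam = μ - p.toSignedMeasure = ν (since n = 0)
      have hlamν : μ - p.toSignedMeasure = ν := by
        rw [← hμν]; abel
      have hνμ : ν ≤ μ := by
        rw [VectorMeasure.le_iff]; intro i hi
        have h2 : 0 ≤ p.toSignedMeasure i := by
          rw [Measure.toSignedMeasure_apply_measurable hi]; positivity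
        have h3 : (μ - ν) i = p.toSignedMeasure i := Stmt7Aux.apply_eq hμν i
        simp only [VectorMeasure.sub_apply] at h3
        linarith
      have hνstar : ν ≤ μstar := hmax ν hν hνμ
      rw [VectorMeasure.le_iff]; intro i hi
      have := VectorMeasure.le_iff.1 hνstar i hi
      simp only [VectorMeasure.sub_apply, VectorMeasure.coe_zero, Pi.zero_apply]
      linarith
    have hzero : ((μ - ν) - (μ - μstar)) Set.univ = 0 := by
      have hμνuniv : (μ - ν) Set.univ = (p Set.univ).toReal := by
        rw [Stmt7Aux.apply_eq hμν Set.univ,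
          Measure.toSignedMeasure_apply_measurable MeasurableSet.univ, measureReal_def]
      simp only [VectorMeasure.sub_apply]
      simp only [VectorMeasure.sub_apply] at hμνuniv hreal
      linarith
    have h0 := Stmt7Aux.eq_zero_of_nonneg_univ hsub hzero
    have heq2 : μ - ν = μ - μstar := sub_eq_zero.1 h0
    exact sub_right_injective heq2
end

section
/- Let a_n, b_n, c_n ∈ L¹(Ω) with a_n ≤ b_n ≤ c_n a.e., where Ω ⊂ ℝ^N is a bounded open set. Assume a_n → a, b_n → b, c_n → c a.e. for some a, b, c ∈ L¹(Ω), and that (c_n − a_n) converges to (c − a) in the weak* topology of finite measures on Ω (i.e., ∫(c_n − a_n)φ → ∫(c − a)φ for every φ ∈ C₀(Ω̄)). Then (c_n − b_n) converges to (c − b) weak* in the sense of measures. -/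
open MeasureTheory Filter

/-- Real-valued Fatou lemma. -/
lemma fatou_real' {α : Type*} [MeasurableSpace α] {μ : Measure α} {f : ℕ → α → ℝ} {F : α → ℝ}
    (hfi : ∀ n, Integrable (f n) μ) (hFi : Integrable F μ)
    (h0 : ∀ n, 0 ≤ᵐ[μ] f n)
    (hf : ∀ᵐ x ∂μ, Tendsto (fun n => f n x) atTop (nhds (F x)))
    (hbd : IsBoundedUnder (· ≤ ·) atTop (fun n => ∫ x, f n x ∂μ)) :
    ∫ x, F x ∂μ ≤ liminf (fun n => ∫ x, f n x ∂μ) atTop := by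
  have h0' : ∀ᵐ x ∂μ, ∀ n, 0 ≤ f n x := (ae_all_iff).2 h0
  have hF0 : 0 ≤ᵐ[μ] F := by
    filter_upwards [h0', hf] with x h1 h2
    exact ge_of_tendsto' h2 h1
  have hx0 : ∀ n, 0 ≤ ∫ x, f n x ∂μ := fun n => integral_nonneg_of_ae (h0 n)
  have bddbelow : IsBoundedUnder (· ≥ ·) atTop (fun n => ∫ x, f n x ∂μ) :=
    isBoundedUnder_of ⟨0, hx0⟩
  have cobdd : IsCoboundedUnder (· ≥ ·) atTop (fun n => ∫ x, f n x ∂μ) :=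
    hbd.isCoboundedUnder_ge
  have key : ∫⁻ x, ENNReal.ofReal (F x) ∂μ ≤
      liminf (fun n => ∫⁻ x, ENNReal.ofReal (f n x) ∂μ) atTop := by
    refine le_trans (le_of_eq (lintegral_congr_ae ?_))
      (lintegral_liminf_le' fun n =>
        ENNReal.measurable_ofReal.comp_aemeasurable (hfi n).aemeasurable)
    filter_upwards [hf] with x hx
    exact ((ENNReal.continuous_ofReal.tendsto _).comp hx).liminf_eq.symm
  have e1 : ∫⁻ x, ENNReal.ofReal (F x) ∂μ = ENNReal.ofReal (∫ x, F x ∂μ) :=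
    (ofReal_integral_eq_lintegral_ofReal hFi hF0).symm
  have e2 : ∀ n, ∫⁻ x, ENNReal.ofReal (f n x) ∂μ = ENNReal.ofReal (∫ x, f n x ∂μ) :=
    fun n => (ofReal_integral_eq_lintegral_ofReal (hfi n) (h0 n)).symm
  rw [e1] at key
  have e3 : (fun n => ∫⁻ x, ENNReal.ofReal (f n x) ∂μ) =
      fun n => ENNReal.ofReal (∫ x, f n x ∂μ) := funext e2
  rw [e3] at key
  have hmap : ENNReal.ofReal (liminf (fun n => ∫ x, f n x ∂μ) atTop) =
      liminf (fun n => ENNReal.ofReal (∫ x, f n x ∂μ)) atTop :=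
    Monotone.map_liminf_of_continuousAt (f := ENNReal.ofReal)
      (fun _ _ h => ENNReal.ofReal_le_ofReal h) _
      ENNReal.continuous_ofReal.continuousAt cobdd bddbelow
  rw [← hmap] at key
  have hlim0 : 0 ≤ liminf (fun n => ∫ x, f n x ∂μ) atTop :=
    le_liminf_of_le cobdd (Eventually.of_forall hx0)
  exact (ENNReal.ofReal_le_ofReal_iff hlim0).mp key

/-- Generalized dominated convergence (sandwich). -/
lemma sandwich_tendsto_integral' {α : Type*} [MeasurableSpace α] {μ : Measure α}
    {f g : ℕ → α → ℝ} {F G : α → ℝ}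
    (hfi : ∀ n, Integrable (f n) μ) (hgi : ∀ n, Integrable (g n) μ)
    (hFi : Integrable F μ) (hGi : Integrable G μ)
    (h0 : ∀ n, 0 ≤ᵐ[μ] f n) (hle : ∀ n, f n ≤ᵐ[μ] g n)
    (hf : ∀ᵐ x ∂μ, Tendsto (fun n => f n x) atTop (nhds (F x)))
    (hg : ∀ᵐ x ∂μ, Tendsto (fun n => g n x) atTop (nhds (G x)))
    (hgint : Tendsto (fun n => ∫ x, g n x ∂μ) atTop (nhds (∫ x, G x ∂μ))) :
    Tendsto (fun n => ∫ x, f n x ∂μ) atTop (nhds (∫ x, F x ∂μ)) := by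
  set x : ℕ → ℝ := fun n => ∫ x, f n x ∂μ with hxdef
  set y : ℕ → ℝ := fun n => ∫ x, (g n x - f n x) ∂μ with hydef
  have hgfi : ∀ n, Integrable (fun x => g n x - f n x) μ := fun n => (hgi n).sub (hfi n)
  have hy0 : ∀ n, 0 ≤ᵐ[μ] fun x => g n x - f n x := fun n => by
    filter_upwards [hle n] with t ht; simpa using ht
  have hx0 : ∀ n, 0 ≤ x n := fun n => integral_nonneg_of_ae (h0 n)
  have hxy : ∀ n, x n + y n = ∫ x, g n x ∂μ := fun n => by
    show (∫ x, f n x ∂μ) + (∫ x, (g n x - f n x) ∂μ) = ∫ x, g n x ∂μ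
    rw [integral_sub (hgi n) (hfi n)]; ring
  -- boundedness
  have hxlez : ∀ n, x n ≤ ∫ x, g n x ∂μ := fun n => by
    have := integral_nonneg_of_ae (hy0 n)
    linarith [hxy n]
  have hzbd : IsBoundedUnder (· ≤ ·) atTop (fun n => ∫ x, g n x ∂μ) :=
    hgint.isBoundedUnder_le
  have hxbd : IsBoundedUnder (· ≤ ·) atTop x :=
    hzbd.mono_le (Eventually.of_forall hxlez)
  have hy0' : ∀ n, 0 ≤ y n := fun n => integral_nonneg_of_ae (hy0 n)
  have hylez : ∀ n, y n ≤ ∫ x, g n x ∂μ := fun n => by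
    have := hx0 n; have := hxy n; linarith
  have hybd : IsBoundedUnder (· ≤ ·) atTop y :=
    hzbd.mono_le (Eventually.of_forall hylez)
  -- Fatou for f and g - f
  have fatF : ∫ t, F t ∂μ ≤ liminf x atTop :=
    fatou_real' hfi hFi h0 hf hxbd
  have fatGF : ∫ t, (G t - F t) ∂μ ≤ liminf y atTop := by
    refine fatou_real' hgfi (hGi.sub hFi) hy0 ?_ hybd
    filter_upwards [hf, hg] with t h1 h2
    exact h2.sub h1
  -- limsup bound
  have hGF : ∫ t, (G t - F t) ∂μ = ∫ t, G t ∂μ - ∫ t, F t ∂μ := integral_sub hGi hFi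
  have hsum : limsup x atTop + liminf y atTop ≤ ∫ t, G t ∂μ := by
    have h1 : limsup x atTop + liminf y atTop ≤ limsup (x + y) atTop :=
      le_limsup_add hxbd (isBoundedUnder_of (r := (· ≥ ·)) ⟨0, hx0⟩).isCoboundedUnder_le hybd (isBoundedUnder_of ⟨0, hy0'⟩)
    have h2 : limsup (x + y) atTop = ∫ t, G t ∂μ := by
      have : (x + y) = fun n => ∫ x, g n x ∂μ := funext hxy
      rw [this]; exact hgint.limsup_eq
    rwa [h2] at h1
  have hsup : limsup x atTop ≤ ∫ t, F t ∂μ := by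
    have := fatGF
    rw [hGF] at this
    linarith
  exact tendsto_of_le_liminf_of_limsup_le fatF hsup hxbd (isBoundedUnder_of ⟨0, hx0⟩)

/-- Sandwich lemma for weak* convergence: if a_n ≤ b_n ≤ c_n a.e., all converge a.e. and
(c_n − a_n) ⇀ (c − a) weak* in the sense of measures (tested against C₀(Ω̄)), then
(c_n − b_n) ⇀ (c − b) weak* in the sense of measures. -/
theorem stmt8 (N : ℕ) (Ω : Set (Fin N → ℝ)) (hΩ : IsOpen Ω)
    (hbd : Bornology.IsBounded Ω)
    (a b c : (Fin N → ℝ) → ℝ) (an bn cn : ℕ → (Fin N → ℝ) → ℝ)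
    (hai : ∀ n, IntegrableOn (an n) Ω) (hbi : ∀ n, IntegrableOn (bn n) Ω)
    (hci : ∀ n, IntegrableOn (cn n) Ω)
    (ha : IntegrableOn a Ω) (hb : IntegrableOn b Ω) (hc : IntegrableOn c Ω)
    (hord : ∀ n, ∀ᵐ x ∂(volume.restrict Ω), an n x ≤ bn n x ∧ bn n x ≤ cn n x)
    (hconva : ∀ᵐ x ∂(volume.restrict Ω), Tendsto (fun n => an n x) atTop (nhds (a x)))
    (hconvb : ∀ᵐ x ∂(volume.restrict Ω), Tendsto (fun n => bn n x) atTop (nhds (b x)))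
    (hconvc : ∀ᵐ x ∂(volume.restrict Ω), Tendsto (fun n => cn n x) atTop (nhds (c x)))
    (hweak : ∀ φ : (Fin N → ℝ) → ℝ, Continuous φ → (∀ x ∈ frontier Ω, φ x = 0) →
      Tendsto (fun n => ∫ x in Ω, (cn n x - an n x) * φ x) atTop
        (nhds (∫ x in Ω, (c x - a x) * φ x))) :
    ∀ φ : (Fin N → ℝ) → ℝ, Continuous φ → (∀ x ∈ frontier Ω, φ x = 0) →
      Tendsto (fun n => ∫ x in Ω, (cn n x - bn n x) * φ x) atTop
        (nhds (∫ x in Ω, (c x - b x) * φ x)) := by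
  -- boundedness of continuous functions on Ω
  have hbound : ∀ φ : (Fin N → ℝ) → ℝ, Continuous φ → ∃ M : ℝ,
      ∀ᵐ x ∂(volume.restrict Ω), ‖φ x‖ ≤ M := by
    intro φ hφ
    have hcpt : IsCompact (closure Ω) := hbd.isCompact_closure
    obtain ⟨M, hM⟩ := (hcpt.image_of_continuousOn (hφ.norm.continuousOn (s := closure Ω))).bddAbove
    refine ⟨M, ?_⟩
    refine (ae_restrict_iff' hΩ.measurableSet).2 (Eventually.of_forall fun x hx => ?_)
    exact hM ⟨x, subset_closure hx, rfl⟩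
  have hmul : ∀ (f : (Fin N → ℝ) → ℝ) (φ : (Fin N → ℝ) → ℝ), IntegrableOn f Ω →
      Continuous φ → IntegrableOn (fun x => f x * φ x) Ω := by
    intro f φ hf hφ
    obtain ⟨M, hM⟩ := hbound φ hφ
    have : IntegrableOn (fun x => φ x * f x) Ω :=
      Integrable.bdd_mul hf (hφ.aestronglyMeasurable.restrict) hM
    simpa [mul_comm] using this
  -- the key case: nonnegative test functions
  have key : ∀ φ : (Fin N → ℝ) → ℝ, Continuous φ → (∀ x ∈ frontier Ω, φ x = 0) →
      (∀ x, 0 ≤ φ x) →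
      Tendsto (fun n => ∫ x in Ω, (cn n x - bn n x) * φ x) atTop
        (nhds (∫ x in Ω, (c x - b x) * φ x)) := by
    intro φ hφ hφ0 hφnn
    refine sandwich_tendsto_integral'
      (f := fun n x => (cn n x - bn n x) * φ x) (g := fun n x => (cn n x - an n x) * φ x)
      (F := fun x => (c x - b x) * φ x) (G := fun x => (c x - a x) * φ x)
      (fun n => hmul _ _ ((hci n).sub (hbi n)) hφ)
      (fun n => hmul _ _ ((hci n).sub (hai n)) hφ)
      (hmul _ _ (hc.sub hb) hφ) (hmul _ _ (hc.sub ha) hφ)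
      ?_ ?_ ?_ ?_ (hweak φ hφ hφ0)
    · intro n
      filter_upwards [hord n] with t ht
      exact mul_nonneg (by linarith [ht.2]) (hφnn t)
    · intro n
      filter_upwards [hord n] with t ht
      exact mul_le_mul_of_nonneg_right (by linarith [ht.1]) (hφnn t)
    · filter_upwards [hconvb, hconvc] with t h1 h2
      exact (h2.sub h1).mul tendsto_const_nhds
    · filter_upwards [hconva, hconvc] with t h1 h2
      exact (h2.sub h1).mul tendsto_const_nhds
  -- general case: split φ into positive and negative parts
  intro φ hφ hφ0
  set φp : (Fin N → ℝ) → ℝ := fun x => max (φ x) 0 with hφpdef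
  set φm : (Fin N → ℝ) → ℝ := fun x => max (-φ x) 0 with hφmdef
  have hφp : Continuous φp := hφ.max continuous_const
  have hφm : Continuous φm := hφ.neg.max continuous_const
  have hφp0 : ∀ x ∈ frontier Ω, φp x = 0 := fun x hx => by
    simp [hφpdef, hφ0 x hx]
  have hφm0 : ∀ x ∈ frontier Ω, φm x = 0 := fun x hx => by
    simp [hφmdef, hφ0 x hx]
  have hsplit : ∀ x, φ x = φp x - φm x := fun x => by
    simp only [hφpdef, hφmdef]
    rcases le_total (φ x) 0 with h | h
    · rw [max_eq_right h, max_eq_left (by linarith)]; ring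
    · rw [max_eq_left h, max_eq_right (by linarith)]; ring
  have hint : ∀ (f : (Fin N → ℝ) → ℝ), IntegrableOn f Ω →
      ∫ x in Ω, f x * φ x = (∫ x in Ω, f x * φp x) - ∫ x in Ω, f x * φm x := by
    intro f hf
    rw [← integral_sub (hmul _ _ hf hφp) (hmul _ _ hf hφm)]
    congr 1; funext x
    rw [hsplit x]; ring
  have h1 := key φp hφp hφp0 (fun x => le_max_right _ _)
  have h2 := key φm hφm hφm0 (fun x => le_max_right _ _)
  have := h1.sub h2
  rw [← hint (fun x => c x - b x) (hc.sub hb)] at this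
  exact this.congr fun n =>
    (hint (fun x => cn n x - bn n x) ((hci n).sub (hbi n))).symm
end

section
/- Abstract lattice consequence: let 𝒢 be a downward-closed subset of an ordered vector space (lattice) of signed measures containing all measures ≤ 0, closed under pairwise suprema, and suppose every μ has a largest element μ* of 𝒢 below it. Then for all μ, ν: (inf{μ, ν})* = inf{μ*, ν*} and (sup{μ, ν})* = sup{μ*, ν*}. -/
open MeasureTheory

private lemma restrict_mono' {α : Type*} [MeasurableSpace α] {v w : SignedMeasure α}
    (h : v ≤ w) (E : Set α) (hE : MeasurableSet E) : v.restrict E ≤ w.restrict E := by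
  rw [VectorMeasure.le_iff]
  intro i hi
  rw [VectorMeasure.restrict_apply _ hE hi, VectorMeasure.restrict_apply _ hE hi]
  exact h (i ∩ E) (hi.inter hE)

private lemma restrict_add_compl' {α : Type*} [MeasurableSpace α] (v : SignedMeasure α)
    {E : Set α} (hE : MeasurableSet E) : v.restrict E + v.restrict Eᶜ = v := by
  ext i hi
  rw [VectorMeasure.add_apply, VectorMeasure.restrict_apply _ hE hi,
    VectorMeasure.restrict_apply _ hE.compl hi,
    ← VectorMeasure.of_union (Set.disjoint_of_subset Set.inter_subset_right
      Set.inter_subset_right disjoint_compl_right) (hi.inter hE) (hi.inter hE.compl),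
    Set.inter_union_compl]

/-- If 𝒢 is a downward-closed class of signed measures containing all nonpositive measures,
closed under pairwise lattice suprema, each μ has a largest element μ* of 𝒢 below it, and
the reduction commutes with restriction, then (inf{μ,ν})* = inf{μ*,ν*} and
(sup{μ,ν})* = sup{μ*,ν*}. -/
theorem stmt16 {α : Type*} [MeasurableSpace α] (G : Set (SignedMeasure α))
    (hneg : ∀ ν : SignedMeasure α, ν ≤ 0 → ν ∈ G)
    (hdown : ∀ ν ∈ G, ∀ lam : SignedMeasure α, lam ≤ ν → lam ∈ G)
    (hsup : ∀ μ₁ ∈ G, ∀ μ₂ ∈ G, ∀ σ : SignedMeasure α, IsLUB {μ₁, μ₂} σ → σ ∈ G)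
    (star : SignedMeasure α → SignedMeasure α)
    (hstar : ∀ μ, star μ ∈ G ∧ star μ ≤ μ ∧ ∀ ν ∈ G, ν ≤ μ → ν ≤ star μ)
    (hrestrict : ∀ (μ : SignedMeasure α) (E : Set α), MeasurableSet E →
      star (μ.restrict E) = (star μ).restrict E)
    (μ ν : SignedMeasure α) :
    (∀ ι κ : SignedMeasure α, IsGLB {μ, ν} ι → IsGLB {star μ, star ν} κ → star ι = κ) ∧
    (∀ σ τ : SignedMeasure α, IsLUB {μ, ν} σ → IsLUB {star μ, star ν} τ → star σ = τ) := by
  obtain ⟨hGμ, hμle, hμmax⟩ := hstar μ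
  obtain ⟨hGν, hνle, hνmax⟩ := hstar ν
  constructor
  · intro ι κ hι hκ
    obtain ⟨hGι, hιle, hιmax⟩ := hstar ι
    have hιμ : ι ≤ μ := hι.1 (Set.mem_insert _ _)
    have hιν : ι ≤ ν := hι.1 (Set.mem_insert_of_mem _ rfl)
    -- star ι is a lower bound of {star μ, star ν}
    have h1 : star ι ≤ κ := by
      apply hκ.2
      rintro x (rfl | rfl)
      · exact hμmax _ hGι (hιle.trans hιμ)
      · exact hνmax _ hGι (hιle.trans hιν)
    have hκμ : κ ≤ star μ := hκ.1 (Set.mem_insert _ _)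
    have hκν : κ ≤ star ν := hκ.1 (Set.mem_insert_of_mem _ rfl)
    have hκι : κ ≤ ι := by
      apply hι.2
      rintro x (rfl | rfl)
      · exact hκμ.trans hμle
      · exact hκν.trans hνle
    have hκG : κ ∈ G := hdown _ hGμ _ hκμ
    exact le_antisymm h1 (hιmax _ hκG hκι)
  · intro σ τ hσ hτ
    obtain ⟨hGσ, hσle, hσmax⟩ := hstar σ
    have hμσ : μ ≤ σ := hσ.1 (Set.mem_insert _ _)
    have hνσ : ν ≤ σ := hσ.1 (Set.mem_insert_of_mem _ rfl)
    have hτG : τ ∈ G := hsup _ hGμ _ hGν _ hτ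
    have hτσ : τ ≤ σ := by
      apply hτ.2
      rintro x (rfl | rfl)
      · exact hμle.trans hμσ
      · exact hνle.trans hνσ
    have h1 : τ ≤ star σ := hσmax _ hτG hτσ
    -- Hahn decomposition of μ - ν
    obtain ⟨E, hE, hE1, hE2⟩ := (μ - ν).exists_compl_positive_negative
    -- μ - ν ≥ 0 on E, ≤ 0 on Eᶜ
    have hνμE : ν.restrict E ≤ μ.restrict E := by
      rw [VectorMeasure.le_iff]
      intro i hi
      have := hE1 i hi
      rw [VectorMeasure.restrict_apply _ hE hi, VectorMeasure.restrict_apply _ hE hi] at this ⊢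
      rw [VectorMeasure.zero_apply] at this
      have := this
      rw [VectorMeasure.sub_apply] at this
      linarith
    have hμνEc : μ.restrict Eᶜ ≤ ν.restrict Eᶜ := by
      rw [VectorMeasure.le_iff]
      intro i hi
      have := hE2 i hi
      rw [VectorMeasure.restrict_apply _ hE.compl hi,
        VectorMeasure.restrict_apply _ hE.compl hi] at this ⊢
      rw [VectorMeasure.zero_apply] at this
      rw [VectorMeasure.sub_apply] at this
      linarith
    set σ₀ : SignedMeasure α := μ.restrict E + ν.restrict Eᶜ with hσ₀def
    have hμσ₀ : μ ≤ σ₀ := by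
      calc μ = μ.restrict E + μ.restrict Eᶜ := (restrict_add_compl' μ hE).symm
        _ ≤ σ₀ := add_le_add le_rfl hμνEc
    have hνσ₀ : ν ≤ σ₀ := by
      calc ν = ν.restrict E + ν.restrict Eᶜ := (restrict_add_compl' ν hE).symm
        _ ≤ σ₀ := add_le_add hνμE le_rfl
    have hσσ₀ : σ ≤ σ₀ := by
      apply hσ.2
      rintro x (rfl | rfl)
      · exact hμσ₀
      · exact hνσ₀
    have hσ₀σ : σ₀ ≤ σ := by
      calc σ₀ ≤ σ.restrict E + σ.restrict Eᶜ :=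
            add_le_add (restrict_mono' hμσ E hE) (restrict_mono' hνσ Eᶜ hE.compl)
        _ = σ := restrict_add_compl' σ hE
    have hσeq : σ = σ₀ := le_antisymm hσσ₀ hσ₀σ
    -- σ restricted to E equals μ restricted to E, and similarly on Eᶜ
    have hσE : σ.restrict E = μ.restrict E := by
      ext i hi
      rw [VectorMeasure.restrict_apply _ hE hi, VectorMeasure.restrict_apply _ hE hi, hσeq,
        hσ₀def, VectorMeasure.add_apply,
        VectorMeasure.restrict_apply _ hE (hi.inter hE),
        VectorMeasure.restrict_apply _ hE.compl (hi.inter hE)]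
      rw [Set.inter_assoc, Set.inter_self, Set.inter_assoc, Set.inter_compl_self,
        Set.inter_empty, VectorMeasure.empty, add_zero]
    have hσEc : σ.restrict Eᶜ = ν.restrict Eᶜ := by
      ext i hi
      rw [VectorMeasure.restrict_apply _ hE.compl hi, VectorMeasure.restrict_apply _ hE.compl hi,
        hσeq, hσ₀def, VectorMeasure.add_apply,
        VectorMeasure.restrict_apply _ hE (hi.inter hE.compl),
        VectorMeasure.restrict_apply _ hE.compl (hi.inter hE.compl)]
      rw [Set.inter_assoc, Set.compl_inter_self, Set.inter_empty, VectorMeasure.empty,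
        Set.inter_assoc, Set.inter_self, zero_add]
    have h2 : star σ ≤ τ := by
      calc star σ = (star σ).restrict E + (star σ).restrict Eᶜ :=
            (restrict_add_compl' (star σ) hE).symm
        _ = star (σ.restrict E) + star (σ.restrict Eᶜ) := by
            rw [hrestrict σ E hE, hrestrict σ Eᶜ hE.compl]
        _ = star (μ.restrict E) + star (ν.restrict Eᶜ) := by rw [hσE, hσEc]
        _ = (star μ).restrict E + (star ν).restrict Eᶜ := by
            rw [hrestrict μ E hE, hrestrict ν Eᶜ hE.compl]
        _ ≤ τ.restrict E + τ.restrict Eᶜ :=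
            add_le_add (restrict_mono' (hτ.1 (Set.mem_insert _ _)) E hE)
              (restrict_mono' (hτ.1 (Set.mem_insert_of_mem _ rfl)) Eᶜ hE.compl)
        _ = τ := restrict_add_compl' τ hE
    exact le_antisymm h2 h1
end

section
/- Let μ ↦ μ* be an order-preserving map on finite signed measures satisfying μ* ≤ μ, (μ − μ*) is always ≥ 0, and the subadditivity-type property: ν ≤ μ implies μ − μ* ≥ ν − ν* whenever additionally (sup{μ,ν})* = sup{μ*, ν*} holds in general. Then (μ* − ν*)⁺ ≤ (μ − ν)⁺ for all μ, ν; in particular |μ* − ν*| ≤ |μ − ν| and μ ≤ ν implies μ* ≤ ν*. -/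
open MeasureTheory

namespace StarAux

variable {α : Type*} [MeasurableSpace α]

/-- The signed measure version of the positive part. -/
noncomputable def pp (s : SignedMeasure α) : SignedMeasure α :=
  s.toJordanDecomposition.posPart.toSignedMeasure

lemma pp_nonneg (s : SignedMeasure α) : 0 ≤ pp s :=
  Measure.zero_le_toSignedMeasure _

lemma le_pp (s : SignedMeasure α) : s ≤ pp s := by
  intro E hE
  conv_lhs => rw [← s.toSignedMeasure_toJordanDecomposition]
  rw [JordanDecomposition.toSignedMeasure, VectorMeasure.sub_apply]
  have h0 : (0 : SignedMeasure α) ≤ s.toJordanDecomposition.negPart.toSignedMeasure :=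
    Measure.zero_le_toSignedMeasure _
  have := h0 E hE
  simp only [VectorMeasure.zero_apply] at this
  simp only [pp]
  linarith

lemma pp_le {s ρ : SignedMeasure α} (h : s ≤ ρ) (hρ : 0 ≤ ρ) : pp s ≤ ρ := by
  obtain ⟨i, hi₁, hi₂, _, hpos, _⟩ := s.toJordanDecomposition_spec
  intro E hE
  have happ : pp s E = s (i ∩ E) := by
    rw [pp, Measure.toSignedMeasure_apply_measurable hE, hpos, measureReal_def,
      SignedMeasure.toMeasureOfZeroLE_apply s hi₂ hi₁ hE]
    simp
  rw [happ]
  have h1 : s (i ∩ E) ≤ ρ (i ∩ E) := h _ (hi₁.inter hE)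
  have hdecomp : ρ E = ρ (i ∩ E) + ρ (E \ i) := by
    rw [← VectorMeasure.of_union (Set.disjoint_sdiff_right.mono_left Set.inter_subset_left)
      (hi₁.inter hE) (hE.diff hi₁)]
    congr 1
    rw [Set.inter_comm, Set.inter_union_diff]
  have h2 : 0 ≤ ρ (E \ i) := by
    have := hρ _ (hE.diff hi₁)
    simpa using this
  linarith

lemma isLUB_pair (μ ν : SignedMeasure α) : IsLUB {μ, ν} (ν + pp (μ - ν)) := by
  have hub1 : μ ≤ ν + pp (μ - ν) := by
    intro E hE
    have := le_pp (μ - ν) E hE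
    simp only [VectorMeasure.sub_apply, VectorMeasure.add_apply] at this ⊢
    linarith
  have hub2 : ν ≤ ν + pp (μ - ν) := by
    intro E hE
    have := pp_nonneg (μ - ν) E hE
    simp only [VectorMeasure.zero_apply, VectorMeasure.add_apply] at this ⊢
    linarith
  constructor
  · rintro x (rfl | rfl)
    · exact hub1
    · exact hub2
  · intro c hc
    have hμc : μ ≤ c := hc (Set.mem_insert _ _)
    have hνc : ν ≤ c := hc (Set.mem_insert_of_mem _ rfl)
    have h1 : μ - ν ≤ c - ν := by
      intro E hE
      have := hμc E hE
      simp only [VectorMeasure.sub_apply]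
      linarith
    have h2 : (0 : SignedMeasure α) ≤ c - ν := by
      intro E hE
      have := hνc E hE
      simp only [VectorMeasure.sub_apply, VectorMeasure.zero_apply]
      linarith
    have h3 := pp_le h1 h2
    intro E hE
    have := h3 E hE
    simp only [VectorMeasure.sub_apply, VectorMeasure.add_apply] at this ⊢
    linarith

lemma key {star : SignedMeasure α → SignedMeasure α}
    (hle : ∀ μ, star μ ≤ μ)
    (hstep : ∀ μ ν : SignedMeasure α, ν ≤ μ → ν - star ν ≤ μ - star μ)
    (hsupcomm : ∀ μ ν σ τ : SignedMeasure α, IsLUB {μ, ν} σ →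
      IsLUB {star μ, star ν} τ → star σ = τ)
    (μ ν : SignedMeasure α) :
    (star μ - star ν).toJordanDecomposition.posPart
      ≤ (μ - ν).toJordanDecomposition.posPart := by
  set σ := ν + pp (μ - ν) with hσ
  set τ := star ν + pp (star μ - star ν) with hτ
  have hστ : star σ = τ := hsupcomm μ ν σ τ (isLUB_pair μ ν) (isLUB_pair (star μ) (star ν))
  have hνσ : ν ≤ σ := (isLUB_pair μ ν).1 (Set.mem_insert_of_mem _ rfl)
  have hstep' := hstep σ ν hνσ
  -- conclude pp (star μ - star ν) ≤ pp (μ - ν) pointwise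
  have hsgn : pp (star μ - star ν) ≤ pp (μ - ν) := by
    intro E hE
    have h1 := hstep' E hE
    rw [hστ] at h1
    simp only [VectorMeasure.sub_apply, hστ, hτ, hσ, VectorMeasure.add_apply] at h1
    linarith
  -- transfer to measures
  refine Measure.le_iff.mpr fun E hE => ?_
  have h2 := hsgn E hE
  rw [pp, pp, Measure.toSignedMeasure_apply_measurable hE,
    Measure.toSignedMeasure_apply_measurable hE] at h2
  exact (ENNReal.toReal_le_toReal (measure_ne_top _ _) (measure_ne_top _ _)).mp h2

end StarAux

/-- If μ ↦ μ* is order preserving, satisfies μ* ≤ μ, the monotone step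
(ν ≤ μ ⟹ ν − ν* ≤ μ − μ*) and commutes with pairwise lattice suprema, then it is
non-expansive: (μ* − ν*)⁺ ≤ (μ − ν)⁺; in particular |μ* − ν*| ≤ |μ − ν| and
μ ≤ ν ⟹ μ* ≤ ν*. -/
theorem stmt17 {α : Type*} [MeasurableSpace α]
    (star : SignedMeasure α → SignedMeasure α)
    (hmono : Monotone star)
    (hle : ∀ μ, star μ ≤ μ)
    (hstep : ∀ μ ν : SignedMeasure α, ν ≤ μ → ν - star ν ≤ μ - star μ)
    (hsupcomm : ∀ μ ν σ τ : SignedMeasure α, IsLUB {μ, ν} σ →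
      IsLUB {star μ, star ν} τ → star σ = τ)
    (μ ν : SignedMeasure α) :
    (star μ - star ν).toJordanDecomposition.posPart
      ≤ (μ - ν).toJordanDecomposition.posPart ∧
    (star μ - star ν).totalVariation ≤ (μ - ν).totalVariation ∧
    (μ ≤ ν → star μ ≤ star ν) := by
  have hpos := StarAux.key hle hstep hsupcomm μ ν
  have hpos' := StarAux.key hle hstep hsupcomm ν μ
  refine ⟨hpos, ?_, fun h => hmono h⟩
  have hneg : (star μ - star ν).toJordanDecomposition.negPart
      ≤ (μ - ν).toJordanDecomposition.negPart := by
    have e1 : (star μ - star ν).toJordanDecomposition.negPart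
        = (star ν - star μ).toJordanDecomposition.posPart := by
      rw [show star ν - star μ = -(star μ - star ν) by abel,
        SignedMeasure.toJordanDecomposition_neg, JordanDecomposition.neg_posPart]
    have e2 : (μ - ν).toJordanDecomposition.negPart
        = (ν - μ).toJordanDecomposition.posPart := by
      rw [show ν - μ = -(μ - ν) by abel,
        SignedMeasure.toJordanDecomposition_neg, JordanDecomposition.neg_posPart]
    rw [e1, e2]
    exact hpos'
  rw [SignedMeasure.totalVariation, SignedMeasure.totalVariation]
  exact add_le_add hpos hneg
end
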